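/- Let (X, E) be a locally finite entourage space. Then a subset A ⊆ X satisfies (B2) (for every x ∈ A there exists E_x ∈ E with A ⊆ E_x[x]) if and only if it satisfies (B3) (there exists E ∈ E with A ⊆ E[x] for every x ∈ A). -/

import Mathlib

open Set

def relInv {X : Type*} (E : Set (X × X)) : Set (X × X) := {p | (p.2, p.1) ∈ E}

def relComp {X : Type*} (E F : Set (X × X)) : Set (X × X) :=
  {p | ∃ y, (p.1, y) ∈ E ∧ (y, p.2) ∈ F}

def IsEntourageStructure {X : Type*} (𝓔 : Set (Set (X × X))) : Prop :=
  (∀ A ∈ 𝓔, ∀ B, B ⊆ A → B ∈ 𝓔) ∧ (∀ A ∈ 𝓔, ∀ B ∈ 𝓔, A ∪ B ∈ 𝓔) ∧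
    Set.diagonal X ∈ 𝓔

def IsQuasiCoarse {X : Type*} (𝓔 : Set (Set (X × X))) : Prop :=
  IsEntourageStructure 𝓔 ∧ ∀ A ∈ 𝓔, ∀ B ∈ 𝓔, relComp A B ∈ 𝓔

def IsSemiCoarse {X : Type*} (𝓔 : Set (Set (X × X))) : Prop :=
  IsEntourageStructure 𝓔 ∧ ∀ A ∈ 𝓔, relInv A ∈ 𝓔

def IsCoarse {X : Type*} (𝓔 : Set (Set (X × X))) : Prop :=
  IsQuasiCoarse 𝓔 ∧ ∀ A ∈ 𝓔, relInv A ∈ 𝓔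

theorem B2_iff_B3_of_locally_finite {X : Type*} (𝓔 : Set (Set (X × X)))
    (hE : IsEntourageStructure 𝓔)
    (hlf : ∀ E ∈ 𝓔, ∀ x : X, {y | (x, y) ∈ E}.Finite) (A : Set X) :
    (∀ x ∈ A, ∃ E ∈ 𝓔, A ⊆ {y | (x, y) ∈ E}) ↔
      (∃ E ∈ 𝓔, ∀ x ∈ A, A ⊆ {y | (x, y) ∈ E}) := by
  obtain ⟨hdown, hunion, hdiag⟩ := hE
  constructor
  · intro h
    rcases A.eq_empty_or_nonempty with rfl | ⟨x₀, hx₀⟩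
    · exact ⟨Set.diagonal X, hdiag, by simp⟩
    · obtain ⟨E₀, hE₀, hAE₀⟩ := h x₀ hx₀
      have hAfin : A.Finite := (hlf E₀ hE₀ x₀).subset hAE₀
      choose! f hf hAf using h
      have key : ∀ s : Set X, s.Finite → s ⊆ A → (⋃ x ∈ s, f x) ∈ 𝓔 := by
        intro s hs
        refine Set.Finite.induction_on s hs ?_ ?_
        · intro _
          exact hdown _ hdiag _ (by simp)
        · intro a t _ _ ih hsub
          rw [Set.biUnion_insert]
          exact hunion _ (hf a (hsub (Set.mem_insert a t))) _
            (ih (fun y hy => hsub (Set.mem_insert_of_mem a hy)))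
      refine ⟨⋃ x ∈ A, f x, key A hAfin subset_rfl, ?_⟩
      intro x hx y hy
      exact Set.mem_biUnion hx (hAf x hx hy)
  · intro ⟨E, hEm, hsub⟩ x hx
    exact ⟨E, hEm, hsub x hx⟩
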